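/- In the formal power series ring $\mathbb{Q}[[t]]$, the identity $\log\left(\tfrac{1}{2}+\tfrac{1}{2}\sqrt{1+t^2}\right) = -\sum_{j=1}^{\infty}(-1)^j\frac{(2j-1)!}{j!\,j!}\left(\frac{t}{2}\right)^{2j}$ holds, where $\sqrt{1+t^2}$ denotes the formal power series $(1+t^2)^{1/2}$ and $\log$ the formal logarithm. -/

import Mathlib

open PowerSeries Finset

/-- Formal exponential of a power series with zero constant term. -/
noncomputable def expPS (f : PowerSeries ℚ) : PowerSeries ℚ :=
  PowerSeries.mk fun n =>
    ∑ k ∈ Finset.range (n + 1), ((k.factorial : ℚ)⁻¹) • PowerSeries.coeff n (f ^ k)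

/-- Formal logarithm `log (1 + u) = ∑_{j ≥ 1} (-1)^{j-1} u^j / j`
for `u` with zero constant term. -/
noncomputable def logOnePlus (u : PowerSeries ℚ) : PowerSeries ℚ :=
  PowerSeries.mk fun n =>
    ∑ j ∈ Finset.range (n + 1), (((-1 : ℚ) ^ (j - 1)) / j) • PowerSeries.coeff n (u ^ j)

/-- `√(1+t²) = exp((1/2)·log(1+t²))`. -/
noncomputable def sqrtOnePlusTSq : PowerSeries ℚ :=
  expPS ((1 / 2 : ℚ) • logOnePlus (PowerSeries.X ^ 2))

namespace LogSqrtAux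

lemma coeff_pow_eq_zero {u : PowerSeries ℚ} (hu : constantCoeff u = 0)
    {m j : ℕ} (h : m < j) : coeff m (u ^ j) = 0 := by
  have h1 : (X : ℚ⟦X⟧) ^ j ∣ u ^ j := pow_dvd_pow_of_dvd (X_dvd_iff.mpr hu) j
  exact X_pow_dvd_iff.mp h1 m h

lemma coeff_mul_congr {v w : ℚ⟦X⟧} (g : ℚ⟦X⟧) (n : ℕ)
    (h : ∀ m ≤ n, coeff m v = coeff m w) :
    coeff n (g * v) = coeff n (g * w) := by
  rw [coeff_mul, coeff_mul]
  refine Finset.sum_congr rfl fun p hp => ?_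
  rw [h p.2 ?_]
  have := Finset.HasAntidiagonal.mem_antidiagonal.mp hp
  omega

lemma coeff_expPS (f : ℚ⟦X⟧) (hf : constantCoeff f = 0) {m N : ℕ} (h : m < N) :
    coeff m (expPS f) = coeff m (∑ k ∈ Finset.range N, ((k.factorial : ℚ)⁻¹) • f ^ k) := by
  rw [expPS, coeff_mk, map_sum]
  simp only [map_smul, smul_eq_mul]
  refine Finset.sum_subset (Finset.range_subset_range.mpr h) fun k _ hk => ?_
  rw [coeff_pow_eq_zero hf (by simp at hk ⊢; omega), mul_zero]

lemma coeff_logOnePlus (u : ℚ⟦X⟧) (hu : constantCoeff u = 0) {m N : ℕ} (h : m < N) :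
    coeff m (logOnePlus u)
      = coeff m (∑ j ∈ Finset.range N, ((((-1 : ℚ) ^ (j - 1)) / j)) • u ^ j) := by
  rw [logOnePlus, coeff_mk, map_sum]
  simp only [map_smul, smul_eq_mul]
  refine Finset.sum_subset (Finset.range_subset_range.mpr h) fun k _ hk => ?_
  rw [coeff_pow_eq_zero hu (by simp at hk ⊢; omega), mul_zero]

end LogSqrtAux

namespace LogSqrtAux

lemma constantCoeff_logOnePlus (u : ℚ⟦X⟧) : constantCoeff (logOnePlus u) = 0 := by
  rw [← coeff_zero_eq_constantCoeff, logOnePlus, coeff_mk]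
  simp

lemma constantCoeff_expPS (f : ℚ⟦X⟧) : constantCoeff (expPS f) = 1 := by
  rw [← coeff_zero_eq_constantCoeff, expPS, coeff_mk]
  simp

lemma mul_deriv_logTrunc (u : ℚ⟦X⟧) (N : ℕ) :
    (1 + u) * d⁄dX ℚ (∑ j ∈ Finset.range (N + 1), (((-1 : ℚ) ^ (j - 1)) / j) • u ^ j)
      = d⁄dX ℚ u - ((-1 : ℚ) ^ N) • (u ^ N * d⁄dX ℚ u) := by
  have termEq : ∀ i : ℕ,
      (1 + u) * d⁄dX ℚ ((((-1 : ℚ) ^ ((i + 1) - 1)) / ((i + 1 : ℕ) : ℚ)) • u ^ (i + 1))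
        = ((-1 : ℚ) ^ i) • (u ^ i * d⁄dX ℚ u)
          - ((-1 : ℚ) ^ (i + 1)) • (u ^ (i + 1) * d⁄dX ℚ u) := by
    intro i
    rw [Derivation.map_smul, Derivation.leibniz_pow]
    simp only [Nat.add_sub_cancel, smul_eq_mul]
    have h1 : ((i + 1 : ℕ)) • (u ^ i * d⁄dX ℚ u) = (((i : ℚ) + 1)) • (u ^ i * d⁄dX ℚ u) := by
      rw [← Nat.cast_smul_eq_nsmul ℚ]; norm_num
    rw [h1, smul_smul]
    push_cast
    rw [div_mul_cancel₀ _ (by positivity : ((i : ℚ) + 1) ≠ 0)]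
    rw [pow_succ, mul_neg_one, neg_smul, sub_neg_eq_add, ← smul_add, mul_smul_comm]
    congr 1
    ring
  calc (1 + u) * d⁄dX ℚ (∑ j ∈ Finset.range (N + 1), (((-1 : ℚ) ^ (j - 1)) / j) • u ^ j)
      = ∑ j ∈ Finset.range (N + 1), (1 + u) * d⁄dX ℚ ((((-1 : ℚ) ^ (j - 1)) / j) • u ^ j) := by
        rw [map_sum, Finset.mul_sum]
    _ = (∑ i ∈ Finset.range N,
          (1 + u) * d⁄dX ℚ ((((-1 : ℚ) ^ ((i + 1) - 1)) / ((i + 1 : ℕ) : ℚ)) • u ^ (i + 1)))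
        + (1 + u) * d⁄dX ℚ ((((-1 : ℚ) ^ ((0 : ℕ) - 1)) / ((0 : ℕ) : ℚ)) • u ^ (0 : ℕ)) :=
        Finset.sum_range_succ' _ _
    _ = ∑ i ∈ Finset.range N, (((-1 : ℚ) ^ i) • (u ^ i * d⁄dX ℚ u)
          - ((-1 : ℚ) ^ (i + 1)) • (u ^ (i + 1) * d⁄dX ℚ u)) := by
        rw [Finset.sum_congr rfl fun i _ => termEq i]
        simp
    _ = ((-1 : ℚ) ^ (0 : ℕ)) • (u ^ (0 : ℕ) * d⁄dX ℚ u)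
          - ((-1 : ℚ) ^ N) • (u ^ N * d⁄dX ℚ u) :=
        Finset.sum_range_sub' _ N
    _ = d⁄dX ℚ u - ((-1 : ℚ) ^ N) • (u ^ N * d⁄dX ℚ u) := by simp

lemma log_ODE (u : ℚ⟦X⟧) (hu : constantCoeff u = 0) :
    (1 + u) * d⁄dX ℚ (logOnePlus u) = d⁄dX ℚ u := by
  ext n
  have key : ∀ m ≤ n, coeff m (d⁄dX ℚ (logOnePlus u))
      = coeff m (d⁄dX ℚ (∑ j ∈ Finset.range (n + 1 + 1), (((-1 : ℚ) ^ (j - 1)) / j) • u ^ j)) := by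
    intro m hm
    rw [coeff_derivative, coeff_derivative,
      coeff_logOnePlus u hu (show m + 1 < n + 1 + 1 by omega)]
  rw [coeff_mul_congr (1 + u) n key]
  rw [mul_deriv_logTrunc u (n + 1)]
  rw [map_sub, map_smul]
  have hz : coeff n (u ^ (n + 1) * d⁄dX ℚ u) = 0 := by
    rw [coeff_mul]
    refine Finset.sum_eq_zero fun p hp => ?_
    rw [coeff_pow_eq_zero hu (show p.1 < n + 1 by
      have := Finset.HasAntidiagonal.mem_antidiagonal.mp hp; omega), zero_mul]
  rw [hz, smul_zero, sub_zero]

lemma deriv_expTrunc (f : ℚ⟦X⟧) (N : ℕ) :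
    d⁄dX ℚ (∑ k ∈ Finset.range (N + 1), ((k.factorial : ℚ)⁻¹) • f ^ k)
      = d⁄dX ℚ f * (∑ k ∈ Finset.range N, ((k.factorial : ℚ)⁻¹) • f ^ k) := by
  rw [map_sum, Finset.sum_range_succ', Finset.mul_sum]
  have h0 : d⁄dX ℚ (((Nat.factorial 0 : ℚ)⁻¹) • f ^ (0 : ℕ)) = 0 := by
    simp
  rw [h0, add_zero]
  refine Finset.sum_congr rfl fun i _ => ?_
  rw [Derivation.map_smul, Derivation.leibniz_pow]
  simp only [Nat.add_sub_cancel, smul_eq_mul]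
  have h1 : ((i + 1 : ℕ)) • (f ^ i * d⁄dX ℚ f) = (((i : ℚ) + 1)) • (f ^ i * d⁄dX ℚ f) := by
    rw [← Nat.cast_smul_eq_nsmul ℚ]; push_cast; ring_nf
  rw [h1, smul_smul, Nat.factorial_succ, mul_smul_comm]
  push_cast
  rw [mul_inv]
  congr 1
  · field_simp
  · ring

lemma exp_ODE (f : ℚ⟦X⟧) (hf : constantCoeff f = 0) :
    d⁄dX ℚ (expPS f) = d⁄dX ℚ f * expPS f := by
  ext n
  rw [coeff_derivative, coeff_expPS f hf (show n + 1 < (n + 1) + 1 by omega),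
    ← coeff_derivative, deriv_expTrunc f (n + 1)]
  exact coeff_mul_congr (d⁄dX ℚ f) n fun m hm =>
    (coeff_expPS f hf (show m < n + 1 by omega)).symm

end LogSqrtAux

namespace LogSqrtAux

lemma eq_C_of_deriv_zero {v : ℚ⟦X⟧} (h : d⁄dX ℚ v = 0) :
    v = PowerSeries.C (constantCoeff v) := by
  refine derivative.ext ?_ ?_
  · rw [h, derivative_C]
  · simp

lemma constantCoeff_s : constantCoeff sqrtOnePlusTSq = 1 :=
  constantCoeff_expPS _

lemma deriv_X_sq : d⁄dX ℚ ((X : ℚ⟦X⟧) ^ 2) = 2 * X := by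
  rw [pow_two, Derivation.leibniz]
  simp only [derivative_X, smul_eq_mul, mul_one]
  ring

lemma B_ne_zero : (1 + X ^ 2 : ℚ⟦X⟧) ≠ 0 := by
  intro h
  have := congrArg (constantCoeff) h
  simp at this

lemma s_ODE : (1 + X ^ 2) * d⁄dX ℚ sqrtOnePlusTSq = X * sqrtOnePlusTSq := by
  have hu2 : constantCoeff ((X : ℚ⟦X⟧) ^ 2) = 0 := by simp
  have hL : constantCoeff ((1 / 2 : ℚ) • logOnePlus ((X : ℚ⟦X⟧) ^ 2)) = 0 := by
    rw [constantCoeff_smul, constantCoeff_logOnePlus]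
    simp
  have hlog := log_ODE ((X : ℚ⟦X⟧) ^ 2) hu2
  rw [deriv_X_sq] at hlog
  have hexp := exp_ODE ((1 / 2 : ℚ) • logOnePlus ((X : ℚ⟦X⟧) ^ 2)) hL
  have hDL : (1 + X ^ 2) * d⁄dX ℚ ((1 / 2 : ℚ) • logOnePlus ((X : ℚ⟦X⟧) ^ 2)) = X := by
    rw [Derivation.map_smul, mul_smul_comm, hlog, smul_eq_C_mul]
    have : (2 * X : ℚ⟦X⟧) = C (2 : ℚ) * X := by
      rw [(map_ofNat (C (R := ℚ)) 2).symm]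
    rw [this, ← mul_assoc, ← map_mul]
    norm_num
  calc (1 + X ^ 2) * d⁄dX ℚ sqrtOnePlusTSq
      = ((1 + X ^ 2) * d⁄dX ℚ ((1 / 2 : ℚ) • logOnePlus ((X : ℚ⟦X⟧) ^ 2))) * sqrtOnePlusTSq := by
        rw [sqrtOnePlusTSq, hexp]; ring
    _ = X * sqrtOnePlusTSq := by rw [hDL]

lemma s_sq : sqrtOnePlusTSq ^ 2 = 1 + X ^ 2 := by
  set s := sqrtOnePlusTSq with hs
  set B : ℚ⟦X⟧ := 1 + X ^ 2 with hB
  have hBc : constantCoeff B ≠ 0 := by rw [hB]; simp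
  have hBinv : B * B⁻¹ = 1 := PowerSeries.mul_inv_cancel B hBc
  have hDB : d⁄dX ℚ B = 2 * X := by rw [hB, map_add, deriv_X_sq]; simp
  have hDh : d⁄dX ℚ (s ^ 2 * B⁻¹) = 0 := by
    have key : B ^ 2 * d⁄dX ℚ (s ^ 2 * B⁻¹) = 0 := by
      rw [Derivation.leibniz, derivative_inv', Derivation.leibniz_pow]
      simp only [smul_eq_mul, hDB]
      have h1 : B * d⁄dX ℚ s = X * s := s_ODE
      calc B ^ 2 * (s ^ 2 * (-B⁻¹ ^ 2 * (2 * X)) + B⁻¹ * ((2 : ℕ) • (s ^ 1 * d⁄dX ℚ s)))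
          = -(2 * X * s ^ 2) * (B * B⁻¹) ^ 2 + 2 * (B * B⁻¹) * (s * (B * d⁄dX ℚ s)) := by
            push_cast [nsmul_eq_mul]
            ring
        _ = 0 := by rw [hBinv, h1]; ring
    have := mul_eq_zero.mp key
    rcases this with h | h
    · exact absurd (pow_eq_zero_iff (by norm_num) |>.mp h) B_ne_zero
    · exact h
  have hconst : s ^ 2 * B⁻¹ = 1 := by
    rw [eq_C_of_deriv_zero hDh]
    rw [map_mul, map_pow, constantCoeff_s, constantCoeff_inv, hB]
    simp
  calc s ^ 2 = s ^ 2 * B⁻¹ * B := by rw [mul_assoc, PowerSeries.inv_mul_cancel B hBc, mul_one]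
    _ = B := by rw [hconst, one_mul]

lemma s_mul_deriv : sqrtOnePlusTSq * d⁄dX ℚ sqrtOnePlusTSq = X := by
  have h := congrArg (d⁄dX ℚ) s_sq
  rw [Derivation.leibniz_pow, map_add, deriv_X_sq, Derivation.map_one_eq_zero, zero_add,
    nsmul_eq_mul] at h
  norm_num at h
  rcases h with h | h
  · exact h
  · exfalso
    have := congrArg (constantCoeff) h
    rw [map_ofNat, map_zero] at this
    norm_num at this

end LogSqrtAux

namespace LogSqrtAux

def cf (n : ℕ) : ℚ :=
  if n = 0 ∨ n % 2 = 1 then 0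
  else -((-1 : ℚ) ^ (n / 2) * ((n - 1).factorial : ℚ) /
    (((n / 2).factorial : ℚ) ^ 2 * 2 ^ n))

noncomputable def gps : ℚ⟦X⟧ := PowerSeries.mk cf

noncomputable def qs : ℚ⟦X⟧ := 1 - X * d⁄dX ℚ gps

lemma cf_odd {n : ℕ} (h : n % 2 = 1) : cf n = 0 := if_pos (Or.inr h)

lemma cf_even (k : ℕ) : cf (2 * k + 2)
    = -((-1 : ℚ) ^ (k + 1) * (((2 * k + 1).factorial : ℚ)) /
      ((((k + 1).factorial : ℚ)) ^ 2 * 2 ^ (2 * k + 2))) := by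
  rw [cf, if_neg (by omega)]
  rw [show (2 * k + 2) / 2 = k + 1 from by omega, show 2 * k + 2 - 1 = 2 * k + 1 from by omega]

lemma cf_rec (k : ℕ) :
    -((2 * (k : ℚ) + 4)) ^ 2 * cf (2 * k + 4) = (2 * k + 2) * (2 * k + 3) * cf (2 * k + 2) := by
  have h4 : 2 * k + 4 = 2 * (k + 1) + 2 := by ring
  rw [h4, cf_even (k + 1), cf_even k]
  have hf1 : ((2 * (k + 1) + 1).factorial : ℚ)
      = (2 * k + 3) * ((2 * k + 2) * ((2 * k + 1).factorial : ℚ)) := by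
    rw [show 2 * (k + 1) + 1 = (2 * k + 2) + 1 from by ring, Nat.factorial_succ,
      Nat.factorial_succ]
    push_cast
    ring
  have hf2 : (((k + 1) + 1).factorial : ℚ) = (k + 2) * ((k + 1).factorial : ℚ) := by
    rw [Nat.factorial_succ]
    push_cast
    ring
  rw [hf1, hf2]
  have hne1 : (((k + 1).factorial : ℚ)) ≠ 0 := by positivity
  have hne2 : ((2 : ℚ)) ^ (2 * k + 2) ≠ 0 := by positivity
  field_simp
  ring

lemma coeff_qs_zero : coeff 0 qs = 1 := by
  rw [qs, map_sub]
  simp [PowerSeries.coeff_zero_eq_constantCoeff]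

lemma coeff_qs_succ (m : ℕ) : coeff (m + 1) qs = -(cf (m + 1) * (m + 1)) := by
  rw [qs, map_sub, coeff_one, coeff_succ_X_mul, coeff_derivative, gps, coeff_mk]
  simp

lemma q_ODE : (1 + X ^ 2) * d⁄dX ℚ qs = -(X * qs) := by
  ext n
  rw [add_mul, one_mul, map_add, map_neg]
  rcases n with _ | m
  · rw [coeff_derivative, coeff_qs_succ 0]
    have : cf 1 = 0 := cf_odd (by norm_num)
    rw [this]
    simp [PowerSeries.coeff_zero_eq_constantCoeff]
  · rw [coeff_derivative, coeff_qs_succ (m + 1), coeff_succ_X_mul,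
      coeff_X_pow_mul' (d⁄dX ℚ qs) 2 (m + 1)]
    rcases m with _ | m'
    · norm_num [coeff_qs_zero, coeff_qs_succ, cf_even 0]
    · rw [if_pos (by omega : 2 ≤ m' + 1 + 1), show m' + 1 + 1 - 2 = m' from by omega,
        coeff_derivative, coeff_qs_succ m']
      rcases Nat.even_or_odd m' with ⟨k, hk⟩ | ⟨k, hk⟩
      · -- m' even: indices m'+1, m'+3 odd ⇒ cf = 0
        have h1 : cf (m' + 1) = 0 := cf_odd (by omega)
        have h2 : cf (m' + 1 + 1 + 1) = 0 := cf_odd (by omega)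
        rw [h1, h2]
        ring
      · -- m' = 2k+1
        subst hk
        have e1 : 2 * k + 1 + 1 + 1 + 1 = 2 * k + 4 := by ring
        have e2 : 2 * k + 1 + 1 = 2 * k + 2 := by ring
        rw [e1, e2]
        have := cf_rec k
        push_cast
        push_cast at this
        nlinarith [this]

end LogSqrtAux

namespace LogSqrtAux

lemma s_ne_zero : sqrtOnePlusTSq ≠ 0 := by
  intro h
  have := congrArg (constantCoeff) h
  rw [constantCoeff_s, map_zero] at this
  norm_num at this

lemma s_mul_qs : sqrtOnePlusTSq * qs = 1 := by
  set s := sqrtOnePlusTSq with hs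
  have hDw : d⁄dX ℚ (s * qs) = 0 := by
    have key : (1 + X ^ 2) * d⁄dX ℚ (s * qs) = 0 := by
      rw [Derivation.leibniz]
      simp only [smul_eq_mul]
      calc (1 + X ^ 2) * (s * d⁄dX ℚ qs + qs * d⁄dX ℚ s)
          = s * ((1 + X ^ 2) * d⁄dX ℚ qs) + qs * ((1 + X ^ 2) * d⁄dX ℚ s) := by ring
        _ = s * (-(X * qs)) + qs * (X * s) := by rw [q_ODE, s_ODE]
        _ = 0 := by ring
    rcases mul_eq_zero.mp key with h | h
    · exact absurd h B_ne_zero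
    · exact h
  rw [eq_C_of_deriv_zero hDw, map_mul, constantCoeff_s, ← coeff_zero_eq_constantCoeff,
    coeff_qs_zero]
  simp

lemma one_add_s_mul_deriv_gps :
    (1 + sqrtOnePlusTSq) * d⁄dX ℚ gps = d⁄dX ℚ sqrtOnePlusTSq := by
  set s := sqrtOnePlusTSq with hs
  have h1 : s * (X * d⁄dX ℚ gps) = s - 1 := by
    have := s_mul_qs
    rw [qs] at this
    have h2 : s * 1 - s * (X * d⁄dX ℚ gps) = 1 := by rw [← mul_sub]; exact this
    rw [mul_one] at h2
    linear_combination -h2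
  have hXs : (X : ℚ⟦X⟧) * s ≠ 0 := mul_ne_zero X_ne_zero s_ne_zero
  have key : (X * s) * ((1 + s) * d⁄dX ℚ gps - d⁄dX ℚ s) = 0 := by
    calc (X * s) * ((1 + s) * d⁄dX ℚ gps - d⁄dX ℚ s)
        = (1 + s) * (s * (X * d⁄dX ℚ gps)) - X * (s * d⁄dX ℚ s) := by ring
      _ = (1 + s) * (s - 1) - X * X := by rw [h1, s_mul_deriv]
      _ = s ^ 2 - 1 - X ^ 2 := by ring
      _ = 0 := by rw [s_sq]; ring
  rcases mul_eq_zero.mp key with h | h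
  · exact absurd h hXs
  · linear_combination h

lemma one_add_s_ne_zero : (1 + sqrtOnePlusTSq : ℚ⟦X⟧) ≠ 0 := by
  intro h
  have := congrArg (constantCoeff) h
  rw [map_add, map_one, constantCoeff_s, map_zero] at this
  norm_num at this

end LogSqrtAux

open LogSqrtAux in
theorem log_half_add_half_sqrt' :
    logOnePlus (PowerSeries.C (1 / 2 : ℚ) + PowerSeries.C (1 / 2 : ℚ) * sqrtOnePlusTSq - 1)
      = gps := by
  set s := sqrtOnePlusTSq with hs
  set u0 : ℚ⟦X⟧ := PowerSeries.C (1 / 2 : ℚ) + PowerSeries.C (1 / 2 : ℚ) * s - 1 with hu0def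
  have hu0 : constantCoeff u0 = 0 := by
    rw [hu0def, map_sub, map_add, map_mul, constantCoeff_C, map_one, hs, constantCoeff_s]
    norm_num
  have h1pu : (1 : ℚ⟦X⟧) + u0 = PowerSeries.C (1 / 2 : ℚ) * (1 + s) := by
    rw [hu0def]; ring
  have hDu0 : d⁄dX ℚ u0 = PowerSeries.C (1 / 2 : ℚ) * d⁄dX ℚ s := by
    rw [hu0def, map_sub, map_add, derivative_C, Derivation.leibniz, derivative_C,
      Derivation.map_one_eq_zero]
    simp only [smul_eq_mul]
    ring
  have hlog := log_ODE u0 hu0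
  rw [h1pu, hDu0] at hlog
  have hCne : (PowerSeries.C (1 / 2 : ℚ)) ≠ 0 := by
    intro h
    have := congrArg (constantCoeff) h
    simp at this
  have hstep : (1 + s) * d⁄dX ℚ (logOnePlus u0) = d⁄dX ℚ s := by
    have := mul_left_cancel₀ hCne (by rw [← hlog]; ring
      : PowerSeries.C (1 / 2 : ℚ) * ((1 + s) * d⁄dX ℚ (logOnePlus u0))
        = PowerSeries.C (1 / 2 : ℚ) * d⁄dX ℚ s)
    exact this
  have hD : d⁄dX ℚ (logOnePlus u0) = d⁄dX ℚ gps := by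
    have key : (1 + s) * (d⁄dX ℚ (logOnePlus u0) - d⁄dX ℚ gps) = 0 := by
      rw [mul_sub, hstep, one_add_s_mul_deriv_gps]
      ring
    rcases mul_eq_zero.mp key with h | h
    · exact absurd h one_add_s_ne_zero
    · linear_combination h
  refine derivative.ext hD ?_
  rw [constantCoeff_logOnePlus, gps, ← coeff_zero_eq_constantCoeff, coeff_mk, cf]
  simp

/-- `log(1/2 + (1/2)√(1+t²)) = -∑_{j≥1} (-1)^j (2j-1)!/(j!j!) (t/2)^{2j}`
in `ℚ[[t]]`. -/
theorem log_half_add_half_sqrt :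
    logOnePlus (PowerSeries.C (1 / 2 : ℚ) + PowerSeries.C (1 / 2 : ℚ) * sqrtOnePlusTSq - 1)
      = PowerSeries.mk fun n =>
          if n = 0 ∨ n % 2 = 1 then 0
          else -((-1 : ℚ) ^ (n / 2) * ((n - 1).factorial : ℚ) /
            (((n / 2).factorial : ℚ) ^ 2 * 2 ^ n)) := by
  have h : (PowerSeries.mk fun n =>
      if n = 0 ∨ n % 2 = 1 then 0
      else -((-1 : ℚ) ^ (n / 2) * ((n - 1).factorial : ℚ) /
        (((n / 2).factorial : ℚ) ^ 2 * 2 ^ n))) = LogSqrtAux.gps := rfl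
  rw [h]
  exact log_half_add_half_sqrt'
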